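/- Let p be a prime with gcd(3,p) = 1 and p^m ≡ 2 (mod 3), and let δ ∈ R^t be a unit that is a cube in R^t, say δ = δ̃³ with δ̃ ∈ R^t. Then δ̃ is a unit of R^t, x^{3p^s} − δ = (x^{p^s} − δ̃)(x^{2p^s} + δ̃x^{p^s} + δ̃²) in R^t[x], and there is a ring isomorphism R^{t,3}_δ = R^t[x]/⟨x^{3p^s} − δ⟩ ≅ R^t[x]/⟨x^{p^s} − δ̃⟩ × R^t[x]/⟨x^{2p^s} + δ̃x^{p^s} + δ̃²⟩. -/

import Mathlib

open Polynomial

/-- The finite chain ring `R^t = 𝔽_{p^m}[u]/⟨u^t⟩`. -/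
abbrev Rt (p m t : ℕ) [Fact p.Prime] : Type _ :=
  Polynomial (GaloisField p m) ⧸ Ideal.span {(X : Polynomial (GaloisField p m)) ^ t}

noncomputable instance Rt.instCommRing (p m t : ℕ) [Fact p.Prime] : CommRing (Rt p m t) :=
  Ideal.Quotient.commRing _

/-- The canonical projection `𝔽_{p^m}[u] → R^t`. -/
noncomputable def mkRt (p m t : ℕ) [Fact p.Prime] :
    Polynomial (GaloisField p m) →+* Rt p m t :=
  Ideal.Quotient.mk _

/-- The element `u ∈ R^t`. -/
noncomputable def uRt (p m t : ℕ) [Fact p.Prime] : Rt p m t := mkRt p m t X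

/-- The canonical embedding `𝔽_{p^m} → R^t`. -/
noncomputable def κ (p m t : ℕ) [Fact p.Prime] : GaloisField p m →+* Rt p m t :=
  (mkRt p m t).comp (C : GaloisField p m →+* Polynomial (GaloisField p m))

/-- The quotient ring `R^t[x]/⟨x^N − δ⟩`. -/
abbrev Qr (p m t : ℕ) [Fact p.Prime] (N : ℕ) (δ : Rt p m t) : Type _ :=
  Polynomial (Rt p m t) ⧸ Ideal.span {(X : Polynomial (Rt p m t)) ^ N - C δ}

/-- The canonical projection `R^t[x] → R^t[x]/⟨x^N − δ⟩`. -/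
noncomputable def mkQr (p m t : ℕ) [Fact p.Prime] (N : ℕ) (δ : Rt p m t) :
    Polynomial (Rt p m t) →+* Qr p m t N δ :=
  Ideal.Quotient.mk _

set_option maxHeartbeats 1600000 in
/-- Let `p` be a prime with `gcd(3,p) = 1` and `p^m ≡ 2 (mod 3)`, and let
`δ ∈ R^t` be a unit that is a cube, say `δ = δ̃³`.  Then `δ̃` is a unit,
`x^{3p^s} − δ = (x^{p^s} − δ̃)(x^{2p^s} + δ̃x^{p^s} + δ̃²)` in `R^t[x]`, and
`R^{t,3}_δ ≅ R^t[x]/⟨x^{p^s} − δ̃⟩ × R^t[x]/⟨x^{2p^s} + δ̃x^{p^s} + δ̃²⟩`. -/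
theorem stmt_17 (p m s t : ℕ) [Fact p.Prime] (hp : p ≠ 3) (hm : m ≠ 0) (ht : 1 ≤ t)
    (hmod : p ^ m % 3 = 2)
    (δt : Rt p m t) (hδ : IsUnit (δt ^ 3)) :
    IsUnit δt ∧
    (X : Polynomial (Rt p m t)) ^ (3 * p ^ s) - C (δt ^ 3) =
      (X ^ p ^ s - C δt) * (X ^ (2 * p ^ s) + C δt * X ^ p ^ s + C (δt ^ 2)) ∧
    Nonempty (Qr p m t (3 * p ^ s) (δt ^ 3) ≃+*
      Qr p m t (p ^ s) δt ×
      (Polynomial (Rt p m t) ⧸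
        Ideal.span {(X : Polynomial (Rt p m t)) ^ (2 * p ^ s) +
          C δt * X ^ p ^ s + C (δt ^ 2)})) := by
  have hu : IsUnit δt := by
    have h : IsUnit (δt * δt ^ 2) := by
      have : δt ^ 3 = δt * δt ^ 2 := by ring
      rwa [this] at hδ
    exact isUnit_of_mul_isUnit_left h
  have hfact : (X : Polynomial (Rt p m t)) ^ (3 * p ^ s) - C (δt ^ 3) =
      (X ^ p ^ s - C δt) * (X ^ (2 * p ^ s) + C δt * X ^ p ^ s + C (δt ^ 2)) := by
    simp only [map_pow]
    ring
  refine ⟨hu, hfact, ?_⟩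
  have h3F : (3 : GaloisField p m) ≠ 0 := by
    have hdvd : ¬ (p ∣ 3) := fun h =>
      hp ((Nat.prime_dvd_prime_iff_eq Fact.out (by norm_num)).mp h)
    intro h0
    exact hdvd ((CharP.cast_eq_zero_iff (GaloisField p m) p 3).mp (by exact_mod_cast h0))
  have h3R : IsUnit (3 : Rt p m t) := by
    have := (isUnit_iff_ne_zero.mpr h3F).map
      ((mkRt p m t).comp (C : GaloisField p m →+* Polynomial (GaloisField p m)))
    rwa [RingHom.comp_apply, map_ofNat, map_ofNat] at this
  have hu3 : IsUnit ((3 : Rt p m t) * δt ^ 2) := h3R.mul (hu.pow 2)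
  obtain ⟨v, hv⟩ := hu3.exists_right_inv
  have hcop : IsCoprime ((X : Polynomial (Rt p m t)) ^ p ^ s - C δt)
      (X ^ (2 * p ^ s) + C δt * X ^ p ^ s + C (δt ^ 2)) := by
    refine ⟨-C v * (X ^ p ^ s + C (2 * δt)), C v, ?_⟩
    have key : (-C v * ((X : Polynomial (Rt p m t)) ^ p ^ s + C (2 * δt))) *
        (X ^ p ^ s - C δt) + C v * (X ^ (2 * p ^ s) + C δt * X ^ p ^ s + C (δt ^ 2)) =
        C ((3 : Rt p m t) * δt ^ 2 * v) := by
      simp only [map_mul, map_pow, map_ofNat]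
      ring
    rw [key, hv, map_one]
  have hIcop : IsCoprime (Ideal.span {(X : Polynomial (Rt p m t)) ^ p ^ s - C δt})
      (Ideal.span {(X : Polynomial (Rt p m t)) ^ (2 * p ^ s) + C δt * X ^ p ^ s + C (δt ^ 2)}) :=
    (Ideal.isCoprime_span_singleton_iff _ _).mpr hcop
  have hEq : Ideal.span {(X : Polynomial (Rt p m t)) ^ (3 * p ^ s) - C (δt ^ 3)} =
      Ideal.span {(X : Polynomial (Rt p m t)) ^ p ^ s - C δt} *
      Ideal.span {(X : Polynomial (Rt p m t)) ^ (2 * p ^ s) + C δt * X ^ p ^ s + C (δt ^ 2)} := by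
    rw [Ideal.span_singleton_mul_span_singleton, hfact]
  exact ⟨(Ideal.quotEquivOfEq hEq).trans (Ideal.quotientMulEquivQuotientProd _ _ hIcop)⟩
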